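/- arXiv:1406.5312 — 3 statements merged into one kernel-verified Lean document; each statement's English description precedes it below -/
import Mathlib

section
/- Suppose a Markov kernel P on ℝ satisfies the drift condition log(e^{-V} P e^{V})(x) ≤ -δ W(x) + b·1_C(x) for functions V = W ≥ 1 and a set C ⊂ ℝ. Define on ℝ² the kernel Q((x,y), ·) = δ_y ⊗ P(y, ·) (the pair-chain kernel), V₂(x,y) = V(y) + (δ/2) W(x), W₂(x,y) = (W(x) + W(y))/2 and C₂ = ℝ × C. Then log(e^{-V₂} Q e^{V₂})(x,y) ≤ -δ W₂(x,y) + b·1_{C₂}(x,y) for all (x,y) ∈ ℝ². -/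
open MeasureTheory ProbabilityTheory

/-- Transfer of the drift condition from a kernel `P` on `ℝ` to the pair-chain
kernel `Q((x,y),·) = δ_y ⊗ P(y,·)` on `ℝ²`, with `V₂(x,y) = V(y) + (δ/2) W(x)`,
`W₂(x,y) = (W(x)+W(y))/2`, `C₂ = ℝ × C` and `V = W`. Since
`∫ e^{V₂} dQ((x,y),·) = ∫ e^{V(z) + (δ/2) V(y)} P(y,dz)`, the conclusion is stated
with this integral. -/
theorem stmt_6 (P : ProbabilityTheory.Kernel ℝ ℝ) [IsMarkovKernel P]
    (V : ℝ → ℝ) (hV : ∀ x, 1 ≤ V x) (δ b : ℝ) (hδ : 0 < δ) (hb : 0 < b)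
    (C : Set ℝ)
    (hdrift : ∀ x : ℝ,
      Real.log (∫ z, Real.exp (V z) ∂(P x)) - V x ≤
        -δ * V x + b * C.indicator (fun _ => (1 : ℝ)) x) :
    ∀ x y : ℝ,
      Real.log (∫ z, Real.exp (V z + (δ / 2) * V y) ∂(P y)) -
          (V y + (δ / 2) * V x) ≤
        -δ * ((V x + V y) / 2) +
          b * Set.indicator (Set.univ ×ˢ C) (fun _ => (1 : ℝ)) (x, y) := by
  intro x y
  have hind : Set.indicator (Set.univ ×ˢ C) (fun _ => (1:ℝ)) (x, y)
      = C.indicator (fun _ => (1:ℝ)) y := by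
    by_cases hy : y ∈ C <;> simp [Set.indicator, hy]
  rw [hind]
  have hA : ∫ z, Real.exp (V z + (δ/2) * V y) ∂(P y)
      = (∫ z, Real.exp (V z) ∂(P y)) * Real.exp ((δ/2) * V y) := by
    simp_rw [Real.exp_add]
    exact integral_mul_const _ _
  have hd := hdrift y
  rw [hA]
  rcases eq_or_lt_of_le (integral_nonneg (fun z => (Real.exp_nonneg _)) :
      (0:ℝ) ≤ ∫ z, Real.exp (V z) ∂(P y)) with h0 | hpos
  · rw [← h0, zero_mul, Real.log_zero]
    rw [← h0, Real.log_zero] at hd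
    have h1 := hV x
    have h2 := hV y
    nlinarith [C.indicator_nonneg (fun a _ => (zero_le_one : (0:ℝ) ≤ 1)) y]
  · rw [Real.log_mul (ne_of_gt hpos) (Real.exp_ne_zero _), Real.log_exp]
    nlinarith [hV x, hV y]
end

section
/- Suppose the averages (1/t) log(V_t/V₀) of a wealth process satisfy a large deviations upper bound with good rate function Λ* that is strictly convex, vanishes only at m > 0, and is decreasing on (-∞, m]. Then P(V_t ≥ V₀ e^{mt/2}) ≥ 1 - e^{-t Λ*(m/2)/2} for all sufficiently large t, so the strategy is an asymptotic exponential arbitrage with geometrically decaying probability of failure. -/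
open MeasureTheory Filter

/-- If the averages `(1/t) log(V_t/V₀)` satisfy a large deviations upper bound with a
nonnegative rate function `I` which is strictly convex, vanishes only at `m > 0` and is
strictly decreasing on `(-∞, m]`, then
`P(V_t ≥ V₀ e^{mt/2}) ≥ 1 - e^{-t I(m/2)/2}` for all large `t`; in particular the
strategy is an asymptotic exponential arbitrage with geometrically decaying
probability of failure. -/
theorem stmt_14 {Ω : Type*} [MeasurableSpace Ω] (P : Measure Ω) [IsProbabilityMeasure P]
    (V : ℕ → Ω → ℝ) (hVmeas : ∀ t, Measurable (V t)) (hVpos : ∀ t ω, 0 < V t ω)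
    (V0 : ℝ) (hV0 : 0 < V0)
    (I : ℝ → ℝ) (hInn : ∀ x, 0 ≤ I x) (m : ℝ) (hm : 0 < m)
    (hzero : ∀ x, I x = 0 ↔ x = m)
    (hconv : StrictConvexOn ℝ Set.univ I)
    (hanti : StrictAntiOn I (Set.Iic m))
    (hLDP : ∀ F : Set ℝ, IsClosed F →
      Filter.limsup
        (fun t : ℕ => ((t : ℝ))⁻¹ *
          Real.log ((P {ω | ((t : ℝ))⁻¹ * Real.log (V t ω / V0) ∈ F}).toReal))
        Filter.atTop ≤ -sInf (I '' F)) :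
    (∃ t0 : ℕ, ∀ t ≥ t0,
      1 - Real.exp (-(t : ℝ) * I (m / 2) / 2) ≤
        (P {ω | V0 * Real.exp (m * t / 2) ≤ V t ω}).toReal) ∧
    0 < I (m / 2) := by
  have hI2pos : 0 < I (m / 2) := by
    rcases lt_or_eq_of_le (hInn (m / 2)) with h | h
    · exact h
    · exfalso
      have := (hzero (m / 2)).mp h.symm
      linarith
  refine ⟨?_, hI2pos⟩
  set F := Set.Iic (m / 2) with hF
  have hls := hLDP F isClosed_Iic
  set f : ℕ → ℝ := fun t : ℕ => ((t : ℝ))⁻¹ *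
      Real.log ((P {ω | ((t : ℝ))⁻¹ * Real.log (V t ω / V0) ∈ F}).toReal) with hfdef
  have hinf : I (m / 2) ≤ sInf (I '' F) := by
    apply le_csInf ⟨I (m / 2), Set.mem_image_of_mem I (show m / 2 ∈ F from Set.mem_Iic.mpr le_rfl)⟩
    rintro b ⟨x, hx, rfl⟩
    have hx' : x ≤ m / 2 := hx
    rcases eq_or_lt_of_le hx' with h | h
    · rw [h]
    · exact le_of_lt (hanti (show x ∈ Set.Iic m from Set.mem_Iic.mpr (by linarith))
        (show m / 2 ∈ Set.Iic m from Set.mem_Iic.mpr (by linarith)) h)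
  have hlt : Filter.limsup f Filter.atTop < -(I (m / 2) / 2) := by
    have h1 : -sInf (I '' F) ≤ -(I (m / 2)) := by linarith
    exact lt_of_le_of_lt (hls.trans h1) (by linarith)
  have hbdd : Filter.IsBoundedUnder (· ≤ ·) Filter.atTop f := by
    refine Filter.isBoundedUnder_of ⟨0, fun t => ?_⟩
    have h1 : ((P {ω | ((t : ℝ))⁻¹ * Real.log (V t ω / V0) ∈ F}).toReal) ≤ 1 :=
      ENNReal.toReal_le_of_le_ofReal zero_le_one (by simpa using prob_le_one)
    exact mul_nonpos_of_nonneg_of_nonpos (by positivity)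
      (Real.log_nonpos ENNReal.toReal_nonneg h1)
  have hev := Filter.eventually_lt_of_limsup_lt hlt hbdd
  rw [Filter.eventually_atTop] at hev
  obtain ⟨t1, ht1⟩ := hev
  refine ⟨max t1 1, fun t ht => ?_⟩
  have htt1 : t1 ≤ t := le_trans (le_max_left _ _) ht
  have ht1' : 1 ≤ t := le_trans (le_max_right _ _) ht
  have htpos : (0 : ℝ) < t := by exact_mod_cast ht1'
  set S := {ω | ((t : ℝ))⁻¹ * Real.log (V t ω / V0) ∈ F} with hS
  set A := {ω | V0 * Real.exp (m * t / 2) ≤ V t ω} with hA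
  have hAmeas : MeasurableSet A := measurableSet_le measurable_const (hVmeas t)
  -- p_t bound
  have hpt : (P S).toReal ≤ Real.exp (-(t : ℝ) * I (m / 2) / 2) := by
    have hf := ht1 t htt1
    rcases eq_or_lt_of_le (ENNReal.toReal_nonneg : (0:ℝ) ≤ (P S).toReal) with h0 | h0
    · rw [← h0]; positivity
    · have hlog : Real.log ((P S).toReal) < -(t : ℝ) * I (m / 2) / 2 := by
        have : (t : ℝ) * f t < (t : ℝ) * (-(I (m / 2) / 2)) :=
          (mul_lt_mul_iff_right₀ htpos).mpr hf
        have heq : (t : ℝ) * f t = Real.log ((P S).toReal) := by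
          show (t : ℝ) * (((t : ℝ))⁻¹ * Real.log ((P S).toReal)) = _
          rw [← mul_assoc, mul_inv_cancel₀ (ne_of_gt htpos), one_mul]
        rw [heq] at this
        nlinarith
      calc (P S).toReal = Real.exp (Real.log ((P S).toReal)) :=
            (Real.exp_log h0).symm
        _ ≤ Real.exp (-(t : ℝ) * I (m / 2) / 2) :=
            Real.exp_le_exp.mpr hlog.le
  -- complement inclusion
  have hsub : Aᶜ ⊆ S := by
    intro ω hω
    simp only [hA, Set.mem_compl_iff, Set.mem_setOf_eq, not_le] at hω
    have hratio : V t ω / V0 < Real.exp (m * t / 2) := by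
      rw [div_lt_iff₀ hV0]
      linarith [hω]
    have hlog : Real.log (V t ω / V0) < m * t / 2 := by
      have := Real.log_lt_log (div_pos (hVpos t ω) hV0) hratio
      rwa [Real.log_exp] at this
    simp only [hS, hF, Set.mem_setOf_eq, Set.mem_Iic]
    have : ((t : ℝ))⁻¹ * Real.log (V t ω / V0) < ((t : ℝ))⁻¹ * (m * t / 2) :=
      (mul_lt_mul_iff_right₀ (inv_pos.mpr htpos)).mpr hlog
    have heq : ((t : ℝ))⁻¹ * (m * t / 2) = m / 2 := by
      field_simp
    linarith [this, heq]
  have hcompl : (P Aᶜ).toReal ≤ (P S).toReal :=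
    ENNReal.toReal_mono (measure_ne_top P S) (measure_mono hsub)
  have hsum : (P A).toReal + (P Aᶜ).toReal = 1 := by
    rw [← ENNReal.toReal_add (measure_ne_top P A) (measure_ne_top P Aᶜ),
      measure_add_measure_compl hAmeas, measure_univ, ENNReal.toReal_one]
  linarith
end

section
/- Let α < 0 and U(x) = -x^α. Suppose a positive wealth process (V_t) satisfies |E[U(V_t)]| ≤ K e^{-ct} for all large t, for some constants c, K > 0. Then for any b > 0 with c + αb > 0, P(V_t < e^{bt}) ≤ K e^{-(c+αb)t} for all large t; in particular the strategy provides asymptotic exponential arbitrage with geometrically decaying failure probability. -/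
open MeasureTheory

/-- If for the power utility `U(x) = -x^α` with `α < 0` the expected utility satisfies
`|E U(V_t)| = E V_t^α ≤ K e^{-ct}` for all large `t`, then for every `b > 0` with
`c + αb > 0` we have `P(V_t < e^{bt}) ≤ K e^{-(c+αb)t}` for all large `t`; in
particular the strategy provides asymptotic exponential arbitrage with geometrically
decaying probability of failure. -/
theorem stmt_16 {Ω : Type*} [MeasurableSpace Ω] (P : Measure Ω) [IsProbabilityMeasure P]
    (V : ℕ → Ω → ℝ) (hVmeas : ∀ t, Measurable (V t)) (hVpos : ∀ t ω, 0 < V t ω)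
    (α : ℝ) (hα : α < 0) (c K : ℝ) (hc : 0 < c) (hK : 0 < K)
    (hU : ∃ T : ℕ, ∀ t ≥ T,
      ∫⁻ ω, ENNReal.ofReal ((V t ω) ^ α) ∂P ≤ ENNReal.ofReal (K * Real.exp (-c * t))) :
    (∀ b : ℝ, 0 < b → 0 < c + α * b → ∃ t0 : ℕ, ∀ t ≥ t0,
      (P {ω | V t ω < Real.exp (b * t)}).toReal ≤ K * Real.exp (-(c + α * b) * t)) ∧
    (∃ b > 0, ∃ c' > 0, ∃ t1 : ℕ, ∀ t ≥ t1,
      1 - Real.exp (-c' * t) ≤ (P {ω | Real.exp (b * t) ≤ V t ω}).toReal) := by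
  obtain ⟨T, hT⟩ := hU
  have main : ∀ b : ℝ, 0 < b → 0 < c + α * b → ∀ t ≥ T,
      (P {ω | V t ω < Real.exp (b * t)}).toReal ≤ K * Real.exp (-(c + α * b) * t) := by
    intro b hb hcb t ht
    set ε : ℝ := Real.exp (α * (b * t)) with hε
    have hεpos : 0 < ε := Real.exp_pos _
    have hsub : {ω | V t ω < Real.exp (b * t)} ⊆
        {ω | ENNReal.ofReal ε ≤ ENNReal.ofReal ((V t ω) ^ α)} := by
      intro ω hω
      have h1 : (Real.exp (b * t)) ^ α ≤ (V t ω) ^ α :=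
        Real.rpow_le_rpow_of_nonpos (hVpos t ω) (le_of_lt hω) hα.le
      have h2 : (Real.exp (b * t)) ^ α = ε := by
        rw [hε, ← Real.exp_mul]; ring_nf
      simp only [Set.mem_setOf_eq]
      exact ENNReal.ofReal_le_ofReal (h2 ▸ h1)
    have hrpow : ∀ ω, (V t ω) ^ α = Real.exp (Real.log (V t ω) * α) :=
      fun ω => Real.rpow_def_of_pos (hVpos t ω) α
    have hmeas : AEMeasurable (fun ω => ENNReal.ofReal ((V t ω) ^ α)) P := by
      simp only [hrpow]
      exact ((Real.measurable_exp.comp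
        ((Real.measurable_log.comp (hVmeas t)).mul_const α)).ennreal_ofReal).aemeasurable
    have markov := mul_meas_ge_le_lintegral₀ hmeas (ENNReal.ofReal ε)
    have hPle : ENNReal.ofReal ε * P {ω | V t ω < Real.exp (b * t)} ≤
        ENNReal.ofReal (K * Real.exp (-c * t)) := by
      calc ENNReal.ofReal ε * P {ω | V t ω < Real.exp (b * t)}
          ≤ ENNReal.ofReal ε * P {ω | ENNReal.ofReal ε ≤ ENNReal.ofReal ((V t ω) ^ α)} :=
            mul_le_mul_right (measure_mono hsub) _
        _ ≤ ∫⁻ ω, ENNReal.ofReal ((V t ω) ^ α) ∂P := markov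
        _ ≤ _ := hT t ht
    have hεne : ENNReal.ofReal ε ≠ 0 := by
      simp [ENNReal.ofReal_eq_zero, not_le, hεpos]
    have hPbound : P {ω | V t ω < Real.exp (b * t)} ≤
        ENNReal.ofReal (K * Real.exp (-c * t)) / ENNReal.ofReal ε :=
      ENNReal.le_div_iff_mul_le (Or.inl hεne) (Or.inl ENNReal.ofReal_ne_top) |>.mpr
        (by rwa [mul_comm])
    have hdiv : ENNReal.ofReal (K * Real.exp (-c * t)) / ENNReal.ofReal ε =
        ENNReal.ofReal (K * Real.exp (-(c + α * b) * t)) := by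
      rw [← ENNReal.ofReal_div_of_pos hεpos]
      congr 1
      rw [hε, mul_div_assoc, ← Real.exp_sub]
      congr 1
      ring
    rw [hdiv] at hPbound
    calc (P {ω | V t ω < Real.exp (b * t)}).toReal
        ≤ (ENNReal.ofReal (K * Real.exp (-(c + α * b) * t))).toReal :=
          ENNReal.toReal_mono ENNReal.ofReal_ne_top hPbound
      _ = K * Real.exp (-(c + α * b) * t) := ENNReal.toReal_ofReal
          (mul_nonneg hK.le (Real.exp_pos _).le)
  refine ⟨fun b hb hcb => ⟨T, main b hb hcb⟩, ?_⟩
  -- second part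
  have hαne : α ≠ 0 := ne_of_lt hα
  have hb : (0:ℝ) < -(c / (2 * α)) := by
    have : c / (2 * α) < 0 := div_neg_of_pos_of_neg hc (by linarith)
    linarith
  set b : ℝ := -(c / (2 * α)) with hbdef
  have hαb : α * b = -(c/2) := by rw [hbdef]; field_simp
  have hcb : 0 < c + α * b := by rw [hαb]; linarith
  refine ⟨b, hb, c/4, by linarith, max T ⌈(4 * Real.log K) / c⌉₊, fun t ht => ?_⟩
  have ht1 : t ≥ T := le_trans (le_max_left _ _) ht
  have ht2 : ((⌈(4 * Real.log K) / c⌉₊ : ℝ)) ≤ t := by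
    exact_mod_cast le_trans (le_max_right _ _) ht
  have hlogK : Real.log K ≤ (c/4) * t := by
    have h1 : (4 * Real.log K) / c ≤ (t : ℝ) :=
      le_trans (Nat.le_ceil _) ht2
    rw [div_le_iff₀ hc] at h1
    linarith
  have hKle : K * Real.exp (-(c + α * b) * t) ≤ Real.exp (-(c/4) * t) := by
    rw [hαb, show c + -(c/2) = c/2 by ring]
    have : K = Real.exp (Real.log K) := (Real.exp_log hK).symm
    rw [this, ← Real.exp_add]
    apply Real.exp_le_exp.mpr
    linarith
  have hbound := le_trans (main b hb hcb t ht1) hKle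
  have hms : MeasurableSet {ω | V t ω < Real.exp (b * t)} :=
    measurableSet_lt (hVmeas t) measurable_const
  have hcompl : {ω | Real.exp (b * t) ≤ V t ω} = {ω | V t ω < Real.exp (b * t)}ᶜ := by
    ext ω; simp [not_lt]
  rw [hcompl, prob_compl_eq_one_sub hms]
  have hfin : P {ω | V t ω < Real.exp (b * t)} ≠ ⊤ := measure_ne_top _ _
  rw [ENNReal.toReal_sub_of_le prob_le_one ENNReal.one_ne_top]
  simp only [ENNReal.toReal_one]
  linarith
end
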